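/- Let T be a theory, p a partial type, and φ(x,y) a formula such that there exist indiscernible sequences ⟨aᵢ⟩ᵢ∈ℚ in p and ⟨bᵢ⟩ᵢ∈ℚ with φ(aᵢ,bⱼ) ⟺ i < j. Then for every n ∈ ℕ the binary-tree scheme Γ_p(φ,n) = { p(x_η) : η ∈ 2ⁿ } ∪ { φ(x_η, y_{η↾k})^{η(k)} : η ∈ 2ⁿ, k < n } is consistent. -/

import Mathlib

open FirstOrder Cardinal

namespace Paper

variable (L : FirstOrder.Language) {M : Type*} [L.Structure M]

/-- Two `n`-tuples have the same type over the parameter set `A`. -/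
def SameTypeT (A : Set M) {n : ℕ} (c c' : Fin n → M) : Prop :=
  ∀ s : Set (Fin n → M), A.Definable L s → (c ∈ s ↔ c' ∈ s)

/-- Two elements have the same type over the parameter set `A`. -/
def SameType (A : Set M) (a a' : M) : Prop :=
  SameTypeT L A (fun _ : Fin 1 => a) (fun _ : Fin 1 => a')

/-- An `A`-indiscernible sequence of `m`-tuples indexed by a linear order `I`. -/
def IndiscT {I : Type*} [LinearOrder I] (A : Set M) {m : ℕ} (c : I → Fin m → M) : Prop :=
  ∀ (n : ℕ) (s : Set (Fin n × Fin m → M)), A.Definable L s →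
    ∀ i j : Fin n → I, StrictMono i → StrictMono j →
      ((fun q => c (i q.1) q.2) ∈ s ↔ (fun q => c (j q.1) q.2) ∈ s)

/-- An `A`-indiscernible sequence of elements. -/
def Indisc {I : Type*} [LinearOrder I] (A : Set M) (c : I → M) : Prop :=
  IndiscT L A (fun i (_ : Fin 1) => c i)

/-- An `A`-indiscernible sequence of pairs. -/
def IndiscPair {I : Type*} [LinearOrder I] (A : Set M) (c d : I → M) : Prop :=
  IndiscT L A (fun i => ![c i, d i])

/-- The (model-theoretic) algebraic closure of `A`. -/
def aclS (A : Set M) : Set M :=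
  {b | ∃ s : Set M, A.Definable₁ L s ∧ b ∈ s ∧ s.Finite}

/-- `a` realizes the partial type `p`, given as a family of sets. -/
def Realizes (p : Set (Set M)) (a : M) : Prop := ∀ s ∈ p, a ∈ s

/-- `p` is a (consistent) partial type over `A`. -/
def IsPartialTypeOver (A : Set M) (p : Set (Set M)) : Prop :=
  (∀ s ∈ p, A.Definable₁ L s) ∧ ∃ a : M, Realizes p a

/-- The ambient structure is a monster model: small finitely-satisfiable families of
definable sets are realized. -/
def IsMonster : Prop :=
  ∀ F : Set (Set M), (∀ s ∈ F, Set.univ.Definable₁ L s) → Cardinal.mk F < Cardinal.mk M →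
    (∀ G : Finset (Set M), ↑G ⊆ F → (⋂₀ (G : Set (Set M))).Nonempty) → (⋂₀ F).Nonempty

/-- Stability (Lascar–Poizat) of the complete type of `a` over `A`: no definable relation
has the order property witnessed by an indiscernible sequence of realizations of the type. -/
def StableType (A : Set M) (a : M) : Prop :=
  ¬ ∃ φ : Set (M × M), Set.univ.Definable₂ L φ ∧ ∃ c d : ℚ → M,
      IndiscPair L A c d ∧ (∀ i, SameType L A a (c i)) ∧
      ∀ i j, ((c i, d j) ∈ φ ↔ i < j)

/-- A family of sets is `k`-inconsistent. -/
def kInconsistent {α β : Type*} (k : ℕ) (F : α → Set β) : Prop :=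
  ∀ S : Finset α, S.card = k → ¬ ∃ x : β, ∀ i ∈ S, x ∈ F i

/-- The instance `φ(x, c)` (with `x` an `n`-tuple of variables and `c` a `k`-tuple of
parameters) divides over `A`. -/
def DividesT (A : Set M) {n k : ℕ} (φ : Set (Fin (n + k) → M)) (c : Fin k → M) : Prop :=
  ∃ cs : ℕ → Fin k → M, cs 0 = c ∧ IndiscT L A cs ∧
    ∃ m : ℕ, 0 < m ∧ kInconsistent m (fun i => {x : Fin n → M | Fin.append x (cs i) ∈ φ})

/-- The instance `φ(x, c)` strongly divides over `A`. -/
def StronglyDividesT (A : Set M) {n k : ℕ} (φ : Set (Fin (n + k) → M)) (c : Fin k → M) : Prop :=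
  {c' | SameTypeT L A c c'}.Infinite ∧
    ∃ m : ℕ, 0 < m ∧ kInconsistent m
      (fun c' : {c' // SameTypeT L A c c'} => {x : Fin n → M | Fin.append x c'.1 ∈ φ})

/-- The instance `φ(x, c)` þ-divides over `A`: it strongly divides over `A ∪ e` for some
finite tuple `e`. -/
def ThDividesT (A : Set M) {n k : ℕ} (φ : Set (Fin (n + k) → M)) (c : Fin k → M) : Prop :=
  ∃ (j : ℕ) (e : Fin j → M), StronglyDividesT L (A ∪ Set.range e) φ c

/-- The type of the tuple `a` over `B` forks over `A`: it implies a finite disjunction of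
instances dividing over `A`. -/
def TypeForksT (A B : Set M) {n : ℕ} (a : Fin n → M) : Prop :=
  ∃ (N : ℕ) (k : Fin N → ℕ) (φ : ∀ i : Fin N, Set (Fin (n + k i) → M))
    (c : ∀ i : Fin N, Fin (k i) → M),
    (∀ i, Set.univ.Definable L (φ i)) ∧ (∀ i, DividesT L A (φ i) (c i)) ∧
    ∀ x : Fin n → M, SameTypeT L B a x → ∃ i, Fin.append x (c i) ∈ φ i

/-- The type of the tuple `a` over `B` þ-forks over `A`. -/
def TypeThForksT (A B : Set M) {n : ℕ} (a : Fin n → M) : Prop :=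
  ∃ (N : ℕ) (k : Fin N → ℕ) (φ : ∀ i : Fin N, Set (Fin (n + k i) → M))
    (c : ∀ i : Fin N, Fin (k i) → M),
    (∀ i, Set.univ.Definable L (φ i)) ∧ (∀ i, ThDividesT L A (φ i) (c i)) ∧
    ∀ x : Fin n → M, SameTypeT L B a x → ∃ i, Fin.append x (c i) ∈ φ i

/-- The type of the element `a` over `B` forks over `A`. -/
def TypeForks (A B : Set M) (a : M) : Prop := TypeForksT L A B (fun _ : Fin 1 => a)

/-- The type of the element `a` over `B` þ-forks over `A`. -/
def TypeThForks (A B : Set M) (a : M) : Prop := TypeThForksT L A B (fun _ : Fin 1 => a)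

/-- þ-independence of tuples: `b ⫝þ_A c`. -/
def ThIndT (A : Set M) {n m : ℕ} (b : Fin n → M) (c : Fin m → M) : Prop :=
  ¬ TypeThForksT L A (A ∪ Set.range c) b

/-- þ-independence of an element from a tuple over `A`. -/
def ThInd (A : Set M) (a : M) {m : ℕ} (c : Fin m → M) : Prop :=
  ThIndT L A (fun _ : Fin 1 => a) c

/-- The ambient structure is rosy: þ-independence is symmetric. -/
def IsRosy : Prop :=
  ∀ (A : Set M) (n m : ℕ) (b : Fin n → M) (c : Fin m → M), ThIndT L A b c ↔ ThIndT L A c b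

/-- The ambient structure is dependent (NIP): no definable relation has the
independence property. -/
def IsNIP : Prop :=
  ∀ (m k : ℕ) (s : Set ((Fin m ⊕ Fin k) → M)), Set.univ.Definable L s →
    ¬ ∃ (a : ℕ → Fin m → M) (b : Set ℕ → Fin k → M),
        ∀ (i : ℕ) (t : Set ℕ), (Sum.elim (a i) (b t) ∈ s ↔ i ∈ t)

/-- `UthGe L A a α` : the þ-rank (foundation rank for þ-forking) of `tp(a/A)` is `≥ α`. -/
def UthGe (A : Set M) (a : M) (α : Ordinal.{0}) : Prop :=
  ∀ β < α, ∃ (B : Set M) (a' : M), A ⊆ B ∧ SameType L A a a' ∧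
    TypeThForks L A B a' ∧ UthGe B a' β
termination_by α

/-- `UGe L A a α` : the U-rank (foundation rank for forking) of `tp(a/A)` is `≥ α`. -/
def UGe (A : Set M) (a : M) (α : Ordinal.{0}) : Prop :=
  ∀ β < α, ∃ (B : Set M) (a' : M), A ⊆ B ∧ SameType L A a a' ∧
    TypeForks L A B a' ∧ UGe B a' β
termination_by α

/-- The U-þ-rank of `tp(a/A)` equals `α`. -/
def UthRankIs (A : Set M) (a : M) (α : Ordinal.{0}) : Prop :=
  UthGe L A a α ∧ ¬ UthGe L A a (α + 1)

/-- The U-rank of `tp(a/A)` equals `α`. -/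
def URankIs (A : Set M) (a : M) (α : Ordinal.{0}) : Prop :=
  UGe L A a α ∧ ¬ UGe L A a (α + 1)

/-- The complete type `tp(a/B)` is definable over `A`. -/
def TypeDefinableOver (A B : Set M) (a : M) : Prop :=
  ∀ (k : ℕ) (φ : Set (Fin (1 + k) → M)), (∅ : Set M).Definable L φ →
    ∃ d : Set (Fin k → M), A.Definable L d ∧
      ∀ c : Fin k → M, (∀ i, c i ∈ B) →
        (Fin.append (fun _ : Fin 1 => a) c ∈ φ ↔ c ∈ d)

/-- The complete type `tp(x₀ / C ∪ {param})`, viewed as a partial type in the parameter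
`param`, strongly divides over `C`. -/
def CTypeStronglyDivides (C : Set M) (param x₀ : M) : Prop :=
  param ∉ aclS L C ∧ ∃ m : ℕ, 0 < m ∧ kInconsistent m
    (fun p' : {p' : M // SameType L C param p'} =>
      {x : M | SameTypeT L C ![x₀, param] ![x, p'.1]})

/-- Some formula of `tp(a/B)` þ-divides over `A`. -/
def TypeThDivides (A B : Set M) (a : M) : Prop :=
  ∃ (k : ℕ) (φ : Set (Fin (1 + k) → M)) (c : Fin k → M),
    Set.univ.Definable L φ ∧ (∀ i, c i ∈ B) ∧
    Fin.append (fun _ : Fin 1 => a) c ∈ φ ∧ ThDividesT L A φ c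

/-- There is a definable transitive relation with an infinite chain of realizations
of `tp(a/A)` (failure of hereditary stability). -/
def HasOrderChainIn (A : Set M) (a : M) : Prop :=
  ∃ R : Set (M × M), Set.univ.Definable₂ L R ∧
    (∀ x y z : M, (x, y) ∈ R → (y, z) ∈ R → (x, z) ∈ R) ∧
    ∃ c : ℕ → M, (∀ i, SameType L A a (c i)) ∧ ∀ i j : ℕ, ((c i, c j) ∈ R ↔ i ≤ j)



private noncomputable def treeRat (η : ℕ → Bool) (n : ℕ) : ℚ :=
  ∑ i ∈ Finset.range n, (if η i then 0 else ((1:ℚ)/2)^(i+1))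

private lemma treeRat_congr (η η' : ℕ → Bool) (k : ℕ) (h : ∀ i < k, η i = η' i) :
    treeRat η k = treeRat η' k := by
  unfold treeRat
  exact Finset.sum_congr rfl fun i hi => by rw [h i (Finset.mem_range.mp hi)]

private lemma tree_geo (m n : ℕ) (h : m ≤ n) :
    ∑ i ∈ Finset.Ico m n, ((1:ℚ)/2)^(i+1) = (1/2)^m - (1/2)^n := by
  induction n, h using Nat.le_induction with
  | base => simp
  | succ n h ih =>
    rw [Finset.sum_Ico_succ_top h, ih]
    ring

private lemma treeRat_key (η : ℕ → Bool) (k n : ℕ) (hk : k < n) :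
    treeRat η n < treeRat η k + (1/2:ℚ)^(k+1) ↔ η k = true := by
  have hsplit : treeRat η n = treeRat η k + ∑ i ∈ Finset.Ico k n,
      (if η i then 0 else ((1:ℚ)/2)^(i+1)) := by
    unfold treeRat
    rw [Finset.range_eq_Ico, Finset.range_eq_Ico]
    exact (Finset.sum_Ico_consecutive (fun i => if η i then 0 else ((1:ℚ)/2)^(i+1)) (Nat.zero_le k) hk.le).symm
  rw [hsplit, add_lt_add_iff_left]
  have hbot : ∑ i ∈ Finset.Ico k n, (if η i then 0 else ((1:ℚ)/2)^(i+1))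
      = (if η k then 0 else ((1:ℚ)/2)^(k+1))
        + ∑ i ∈ Finset.Ico (k+1) n, (if η i then 0 else ((1:ℚ)/2)^(i+1)) :=
    Finset.sum_eq_sum_Ico_succ_bot hk _
  constructor
  · intro h
    by_contra hf
    rw [Bool.not_eq_true] at hf
    rw [hbot, hf, if_neg (by simp)] at h
    have : (0:ℚ) ≤ ∑ i ∈ Finset.Ico (k+1) n, (if η i then 0 else ((1:ℚ)/2)^(i+1)) :=
      Finset.sum_nonneg (by intro i _; positivity)
    linarith
  · intro h
    rw [hbot, h, if_pos rfl, zero_add]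
    calc ∑ i ∈ Finset.Ico (k+1) n, (if η i then 0 else ((1:ℚ)/2)^(i+1))
        ≤ ∑ i ∈ Finset.Ico (k+1) n, ((1:ℚ)/2)^(i+1) := by
          apply Finset.sum_le_sum; intro i _
          split
          · positivity
          · exact le_refl _
      _ = (1/2)^(k+1) - (1/2)^n := tree_geo _ _ hk
      _ < (1/2)^(k+1) := by
          have : (0:ℚ) < (1/2)^n := by positivity
          linarith

/-- the order property witnessed by indiscernible sequences in `p`
implies consistency of the binary-tree schemes `Γ_p(φ, n)` for every `n`. -/
theorem statement_2
    (hM : IsMonster L (M := M))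
    (A : Set M) (p : Set (Set M)) (hp : IsPartialTypeOver L A p)
    (φ : Set (M × M)) (hφ : Set.univ.Definable₂ L φ)
    (a b : ℚ → M) (hind : IndiscPair L A a b)
    (ha : ∀ i, Realizes p (a i))
    (hop : ∀ i j : ℚ, ((a i, b j) ∈ φ ↔ i < j)) :
    ∀ n : ℕ, ∃ (x : (ℕ → Bool) → M) (y : (ℕ → Bool) → ℕ → M),
      (∀ η η' : ℕ → Bool, ∀ k : ℕ, (∀ i < k, η i = η' i) → y η k = y η' k) ∧
      ∀ η : ℕ → Bool, Realizes p (x η) ∧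
        ∀ k < n, ((x η, y η k) ∈ φ ↔ η k = true) := by
  intro n
  refine ⟨fun η => a (treeRat η n),
    fun η k => b (treeRat η k + (1/2:ℚ)^(k+1)), ?_, ?_⟩
  · intro η η' k h
    simp only []
    rw [treeRat_congr η η' k h]
  · intro η
    refine ⟨ha _, fun k hk => ?_⟩
    rw [hop]
    exact treeRat_key η k n hk


end Paper
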